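/- arXiv:1612.03327 — 2 statements merged into one kernel-verified Lean document; each statement's English description precedes it below -/
import Mathlib

section
/- Let E be a Riesz space with more than one element such that the only order ideals of E are {0} and E. Then E is totally ordered and Archimedean, and hence isomorphic as a Riesz space to ℝ. -/
variable {E : Type*} [Lattice E] [AddCommGroup E] [Module ℝ E]
  [CovariantClass E E (· + ·) (· ≤ ·)] [PosSMulMono ℝ E]

section Aux

lemma aux_smul_le_smul_right {c d : ℝ} (h : c ≤ d) {v : E} (hv : 0 ≤ v) :
    c • v ≤ d • v := by
  have h1 : 0 ≤ (d - c) • v := smul_nonneg (by linarith) hv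
  rwa [sub_smul, sub_nonneg] at h1

lemma aux_pos_cancel {s : ℝ} {v : E} (hs : 0 < s) (h : s • v ≤ 0) : v ≤ 0 := by
  have h2 := smul_le_smul_of_nonneg_left h (inv_nonneg.mpr hs.le)
  rwa [smul_smul, inv_mul_cancel₀ hs.ne', one_smul, smul_zero] at h2

lemma aux_smul_le (c : ℝ) (y : E) : c • y ≤ |c| • |y| := by
  rcases le_or_gt 0 c with h | h
  · calc c • y ≤ c • |y| := smul_le_smul_of_nonneg_left le_sup_left h
      _ ≤ |c| • |y| := aux_smul_le_smul_right (le_abs_self c) (abs_nonneg y)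
  · have h1 : c • y = (-c) • (-y) := by rw [neg_smul_neg]
    rw [h1]
    calc (-c) • (-y) ≤ (-c) • |y| := smul_le_smul_of_nonneg_left le_sup_right (by linarith)
      _ ≤ |c| • |y| := aux_smul_le_smul_right (neg_le_abs c) (abs_nonneg y)

lemma aux_abs_smul_le (c : ℝ) (y : E) : |c • y| ≤ |c| • |y| := by
  refine sup_le (aux_smul_le c y) ?_
  rw [← neg_smul]
  simpa using aux_smul_le (-c) y

lemma aux_disj_add {a b c : E} (hc : 0 ≤ c) (hab : a ⊓ b = 0) (hac : a ⊓ c = 0) :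
    a ⊓ (b + c) = 0 := by
  have ha : (0 : E) ≤ a := hab ▸ inf_le_left
  have hb : (0 : E) ≤ b := hab ▸ inf_le_right
  apply le_antisymm
  · have h1 : a ⊓ (b + c) ≤ (a + c) ⊓ (b + c) :=
      inf_le_inf_right _ (le_add_of_nonneg_right hc)
    rw [← inf_add, hab, zero_add] at h1
    calc a ⊓ (b + c) ≤ a ⊓ c := le_inf inf_le_left h1
      _ = 0 := hac
  · exact le_inf ha (add_nonneg hb hc)

lemma aux_disj_nsmul {a b : E} (hab : a ⊓ b = 0) : ∀ n : ℕ, a ⊓ (n • b) = 0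
  | 0 => by
      have ha : (0 : E) ≤ a := hab ▸ inf_le_left
      rw [zero_smul]
      exact inf_eq_right.mpr ha
  | n + 1 => by
      rw [succ_nsmul]
      exact aux_disj_add (hab ▸ inf_le_right) (aux_disj_nsmul hab n) hab

lemma aux_disj_smul {a b : E} (hb : 0 ≤ b) (hab : a ⊓ b = 0) {c : ℝ} (hc : 0 ≤ c) :
    a ⊓ (c • b) = 0 := by
  have ha : (0 : E) ≤ a := hab ▸ inf_le_left
  have h1 : c • b ≤ (⌈c⌉₊ : ℕ) • b := by
    have h2 := aux_smul_le_smul_right (Nat.le_ceil c) hb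
    rwa [Nat.cast_smul_eq_nsmul] at h2
  apply le_antisymm
  · calc a ⊓ (c • b) ≤ a ⊓ ((⌈c⌉₊ : ℕ) • b) :=
        le_inf inf_le_left (inf_le_right.trans h1)
      _ = 0 := aux_disj_nsmul hab _
  · exact le_inf ha (smul_nonneg hc hb)

/-- The order ideal generated by `e`. -/
def auxIdealOf (e : E) : Submodule ℝ E where
  carrier := {y | ∃ c : ℝ, 0 ≤ c ∧ |y| ≤ c • e}
  add_mem' := by
    rintro y z ⟨c, hc, hy⟩ ⟨d, hd, hz⟩
    refine ⟨c + d, by linarith, le_trans (abs_add_le y z) ?_⟩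
    rw [add_smul]
    exact add_le_add hy hz
  zero_mem' := ⟨0, le_rfl, by simp⟩
  smul_mem' := by
    rintro r y ⟨c, hc, hy⟩
    refine ⟨|r| * c, mul_nonneg (abs_nonneg r) hc, le_trans (aux_abs_smul_le r y) ?_⟩
    rw [mul_smul]
    exact smul_le_smul_of_nonneg_left hy (abs_nonneg r)

lemma mem_auxIdealOf {e y : E} : y ∈ auxIdealOf e ↔ ∃ c : ℝ, 0 ≤ c ∧ |y| ≤ c • e :=
  Iff.rfl

lemma auxIdealOf_isIdeal (e : E) :
    ∀ a ∈ auxIdealOf e, ∀ x : E, |x| ≤ |a| → x ∈ auxIdealOf e := by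
  rintro a ⟨c, hc, ha⟩ x hx
  exact ⟨c, hc, hx.trans ha⟩

end Aux

theorem simple_riesz_space_is_real (hnt : Nontrivial E)
    (hideals : ∀ D : Submodule ℝ E,
      (∀ a ∈ D, ∀ x : E, |x| ≤ |a| → x ∈ D) → D = ⊥ ∨ D = ⊤) :
    (∀ x y : E, x ≤ y ∨ y ≤ x) ∧
    (∀ x b : E, (∀ n : ℤ, n • x ≤ b) → x = 0) ∧
    (∃ φ : E ≃ₗ[ℝ] ℝ, ∀ x y : E, x ≤ y ↔ φ x ≤ φ y) := by
  -- Part 1: total order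
  have htot : ∀ x y : E, x ≤ y ∨ y ≤ x := by
    intro x y
    rcases hideals (auxIdealOf ((x - y)⁺)) (auxIdealOf_isIdeal _) with hD | hD
    · left
      have hmem : (x - y)⁺ ∈ auxIdealOf ((x - y)⁺) :=
        ⟨1, zero_le_one, by
          rw [one_smul, abs_of_nonneg (posPart_nonneg _)]⟩
      rw [hD, Submodule.mem_bot] at hmem
      exact sub_nonpos.mp (posPart_eq_zero.mp hmem)
    · right
      have hmem : (x - y)⁻ ∈ auxIdealOf ((x - y)⁺) := by
        rw [hD]; exact Submodule.mem_top
      obtain ⟨c, hc, hle⟩ := hmem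
      rw [abs_of_nonneg (negPart_nonneg _)] at hle
      have hdisj : (x - y)⁻ ⊓ (c • (x - y)⁺) = 0 :=
        aux_disj_smul (posPart_nonneg _)
          (by rw [inf_comm]; exact posPart_inf_negPart_eq_zero _) hc
      have hz : (x - y)⁻ = 0 := by
        rw [← hdisj]
        exact (inf_eq_left.mpr hle).symm
      exact sub_nonneg.mp (negPart_eq_zero.mp hz)
  -- Part 2: Archimedean
  have harch : ∀ x b : E, (∀ n : ℤ, n • x ≤ b) → x = 0 := by
    intro x b hb
    by_contra hx
    have he0 : (0 : E) ≤ |x| := abs_nonneg x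
    have hne : auxIdealOf |x| ≠ ⊥ := by
      intro h
      have hmem : x ∈ auxIdealOf |x| := ⟨1, zero_le_one, by rw [one_smul]⟩
      rw [h, Submodule.mem_bot] at hmem
      exact hx hmem
    have hD := (hideals (auxIdealOf |x|) (auxIdealOf_isIdeal _)).resolve_left hne
    have hbmem : b ∈ auxIdealOf |x| := by rw [hD]; exact Submodule.mem_top
    obtain ⟨c, hc, hcb⟩ := hbmem
    have habs : ∀ n : ℤ, n • |x| ≤ b := by
      intro n
      rcases htot (-x) x with h | h
      · have hax : |x| = x := sup_eq_left.mpr h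
        rw [hax]; exact hb n
      · have hax : |x| = -x := sup_eq_right.mpr h
        rw [hax, zsmul_neg, ← neg_zsmul]
        exact hb (-n)
    set n : ℕ := ⌈c⌉₊ + 1 with hn
    have h1 : ((n : ℤ)) • |x| ≤ c • |x| :=
      (habs n).trans ((le_sup_left.trans_eq rfl : b ≤ |b|).trans hcb)
    have h2 : ((n : ℝ)) • |x| ≤ c • |x| := by
      rwa [show ((n : ℝ)) • |x| = ((n : ℤ)) • |x| by
        rw [← Int.cast_natCast, Int.cast_smul_eq_zsmul]]
    have h3 : ((n : ℝ) - c) • |x| ≤ 0 := by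
      rw [sub_smul]
      exact sub_nonpos.mpr h2
    have hcn : 0 < (n : ℝ) - c := by
      have := Nat.le_ceil c
      have hlt : (⌈c⌉₊ : ℝ) < n := by exact_mod_cast Nat.lt_succ_self ⌈c⌉₊
      linarith
    have h4 : |x| ≤ 0 := aux_pos_cancel hcn h3
    have h5 : |x| = 0 := le_antisymm h4 he0
    apply hx
    have hx1 : x ≤ 0 := le_sup_left.trans_eq h5
    have hx2 : -x ≤ 0 := le_sup_right.trans_eq h5
    exact le_antisymm hx1 (by simpa using hx2)
  refine ⟨htot, harch, ?_⟩
  -- Part 3: isomorphism with ℝ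
  obtain ⟨u, v, huv⟩ := hnt
  set e : E := |u - v| with he
  have hene : e ≠ 0 := by
    intro h
    apply huv
    have h1 : u - v ≤ 0 := le_sup_left.trans_eq h
    have h2 : -(u - v) ≤ 0 := le_sup_right.trans_eq h
    have := le_antisymm h1 (by simpa using h2)
    exact sub_eq_zero.mp this
  have he0 : (0 : E) ≤ e := abs_nonneg _
  -- ideal generated by e is everything
  have hD : auxIdealOf e = ⊤ := by
    refine (hideals (auxIdealOf e) (auxIdealOf_isIdeal _)).resolve_left ?_
    intro h
    have hmem : e ∈ auxIdealOf e :=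
      ⟨1, zero_le_one, by rw [one_smul, abs_of_nonneg he0]⟩
    rw [h, Submodule.mem_bot] at hmem
    exact hene hmem
  have hbound : ∀ x : E, ∃ c : ℝ, 0 ≤ c ∧ |x| ≤ c • e := by
    intro x
    have : x ∈ auxIdealOf e := by rw [hD]; exact Submodule.mem_top
    exact this
  -- scalar cancellation against e
  have hcancel : ∀ c d : ℝ, c • e ≤ d • e → c ≤ d := by
    intro c d h
    by_contra hcd
    push_neg at hcd
    have h1 : (c - d) • e ≤ 0 := by
      rw [sub_smul]; exact sub_nonpos.mpr h
    have h2 : e ≤ 0 := aux_pos_cancel (by linarith) h1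
    exact hene (le_antisymm h2 he0)
  -- small multiples of e below any strictly positive element
  have hsmall : ∀ d : E, 0 ≤ d → d ≠ 0 → ∃ s : ℝ, 0 < s ∧ s • e ≤ d := by
    intro d hd0 hdne
    have hnotall : ¬ ∀ n : ℤ, n • d ≤ e := fun h => hdne (harch d e h)
    push_neg at hnotall
    obtain ⟨n, hn⟩ := hnotall
    have hend : e ≤ n • d := (htot (n • d) e).resolve_left hn
    have hnpos : 0 < n := by
      by_contra hnn
      push_neg at hnn
      apply hn
      have h1 : ((n : ℝ)) • d ≤ (0 : ℝ) • d :=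
        aux_smul_le_smul_right (by exact_mod_cast hnn) hd0
      rw [zero_smul] at h1
      rw [← Int.cast_smul_eq_zsmul ℝ]
      exact h1.trans he0
    refine ⟨((n : ℝ))⁻¹, by positivity, ?_⟩
    have h1 : e ≤ ((n : ℝ)) • d := by rwa [Int.cast_smul_eq_zsmul ℝ]
    have h2 := smul_le_smul_of_nonneg_left h1 (by positivity : (0:ℝ) ≤ ((n : ℝ))⁻¹)
    rwa [smul_smul, inv_mul_cancel₀ (by exact_mod_cast hnpos.ne'), one_smul] at h2
  -- every element is a real multiple of e
  have hkey : ∀ x : E, ∃ r : ℝ, r • e = x := by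
    intro x
    obtain ⟨C, hC0, hC⟩ := hbound x
    set S : Set ℝ := {c : ℝ | c • e ≤ x} with hS
    have hSne : S.Nonempty := by
      refine ⟨-C, ?_⟩
      have h1 : -(C • e) ≤ -|x| := neg_le.mpr (by simpa using hC)
      have h2 : -|x| ≤ x := by
        rw [neg_le]
        exact le_sup_right
      show (-C) • e ≤ x
      rw [neg_smul]
      exact h1.trans h2
    have hSbdd : BddAbove S := by
      refine ⟨C, fun c hc => ?_⟩
      exact hcancel c C (hc.trans (le_sup_left.trans hC))
    set r : ℝ := sSup S with hr
    have h1 : r • e ≤ x := by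
      by_contra hcon
      have hxr : x ≤ r • e := (htot (r • e) x).resolve_left hcon
      have hdne : r • e - x ≠ 0 := by
        intro h
        exact hcon (le_of_eq (sub_eq_zero.mp h))
      obtain ⟨s, hs0, hse⟩ := hsmall (r • e - x) (sub_nonneg.mpr hxr) hdne
      have hxs : x ≤ (r - s) • e := by
        rw [sub_smul]
        have h9 := sub_le_sub_left hse (r • e)
        rwa [sub_sub_cancel] at h9
      have hub : ∀ c ∈ S, c ≤ r - s := by
        intro c hc
        exact hcancel c (r - s) (hc.trans hxs)
      have h10 := csSup_le hSne hub
      rw [← hr] at h10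
      exact absurd h10 (not_le.mpr (sub_lt_self r hs0))
    have h2 : x ≤ r • e := by
      by_contra hcon
      have hrx : r • e ≤ x := (htot x (r • e)).resolve_left hcon
      have hdne : x - r • e ≠ 0 := by
        intro h
        exact hcon (le_of_eq (sub_eq_zero.mp h))
      obtain ⟨s, hs0, hse⟩ := hsmall (x - r • e) (sub_nonneg.mpr hrx) hdne
      have hmem : r + s ∈ S := by
        show (r + s) • e ≤ x
        rw [add_smul]
        have := add_le_add_left hse (r • e)
        rwa [sub_add_cancel, add_comm] at this
      have h10 := le_csSup hSbdd hmem
      rw [← hr] at h10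
      exact absurd h10 (not_le.mpr (lt_add_of_pos_right r hs0))
    exact ⟨r, le_antisymm h1 h2⟩
  -- build the linear equivalence
  have hinj : Function.Injective (LinearMap.toSpanSingleton ℝ E e) := by
    intro c d h
    simp only [LinearMap.toSpanSingleton_apply] at h
    by_contra hcd
    have h1 : (c - d) • e = 0 := by rw [sub_smul, h, sub_self]
    have h2 : e = 0 := by
      have := congrArg (fun z => (c - d)⁻¹ • z) h1
      simpa [smul_smul, inv_mul_cancel₀ (sub_ne_zero.mpr hcd)] using this
    exact hene h2
  have hsurj : Function.Surjective (LinearMap.toSpanSingleton ℝ E e) := by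
    intro x
    obtain ⟨r, hr⟩ := hkey x
    exact ⟨r, hr⟩
  let ψ : ℝ ≃ₗ[ℝ] E := LinearEquiv.ofBijective _ ⟨hinj, hsurj⟩
  refine ⟨ψ.symm, fun x y => ?_⟩
  have hgen : ∀ z : E, (ψ.symm z) • e = z := by
    intro z
    calc (ψ.symm z) • e
        = LinearMap.toSpanSingleton ℝ E e (ψ.symm z) :=
          (LinearMap.toSpanSingleton_apply ℝ E e _).symm
      _ = ψ (ψ.symm z) := (LinearEquiv.ofBijective_apply _ _).symm
      _ = z := ψ.apply_symm_apply z
  have hxe := hgen x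
  have hye := hgen y
  constructor
  · intro h
    rw [← hxe, ← hye] at h
    exact hcancel _ _ h
  · intro h
    rw [← hxe, ← hye]
    exact aux_smul_le_smul_right h he0
end

section
/- Let E be an Archimedean Riesz space with order unit e, and let a ∈ E with a ≠ 0. Then there exists a Riesz homomorphism φ : E → ℝ with φ(e) = 1 and φ(a) ≠ 0. -/
set_option linter.unusedSectionVars false

variable {E : Type*} [Lattice E] [AddCommGroup E] [Module ℝ E]
  [CovariantClass E E (· + ·) (· ≤ ·)] [PosSMulMono ℝ E]

private lemma rsz_smul_mono {c : ℝ} (hc : 0 ≤ c) {x y : E} (h : x ≤ y) : c • x ≤ c • y :=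
  smul_le_smul_of_nonneg_left h hc

private lemma rsz_smul_sup {c : ℝ} (hc : 0 < c) (x y : E) : c • (x ⊔ y) = c • x ⊔ c • y := by
  have inv : ∀ z w : E, c • z ≤ w → z ≤ c⁻¹ • w := by
    intro z w h
    have := rsz_smul_mono (by positivity : (0:ℝ) ≤ c⁻¹) h
    rwa [smul_smul, inv_mul_cancel₀ hc.ne', one_smul] at this
  apply le_antisymm
  · have h1 : x ⊔ y ≤ c⁻¹ • (c • x ⊔ c • y) :=
      sup_le (inv _ _ le_sup_left) (inv _ _ le_sup_right)
    have := rsz_smul_mono hc.le h1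
    rwa [smul_smul, mul_inv_cancel₀ hc.ne', one_smul] at this
  · exact sup_le (rsz_smul_mono hc.le le_sup_left) (rsz_smul_mono hc.le le_sup_right)

private lemma rsz_smul_inf {c : ℝ} (hc : 0 < c) (x y : E) : c • (x ⊓ y) = c • x ⊓ c • y := by
  have := rsz_smul_sup hc (-x) (-y)
  have h2 : -(x ⊓ y) = -x ⊔ -y := by
    rw [neg_inf]
  calc c • (x ⊓ y) = -(c • (-x ⊔ -y)) := by rw [← h2, smul_neg, neg_neg]
    _ = -(c • -x ⊔ c • -y) := by rw [this]
    _ = c • x ⊓ c • y := by rw [neg_sup, smul_neg, smul_neg, neg_neg, neg_neg]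

private lemma rsz_smul_posPart {c : ℝ} (hc : 0 ≤ c) (x : E) : (c • x)⁺ = c • x⁺ := by
  rcases eq_or_lt_of_le hc with h | h
  · simp [← h]
  · rw [posPart_def, posPart_def, rsz_smul_sup h, smul_zero]

private lemma rsz_posPart_le {z m : E} (h : z ≤ m) (hm : 0 ≤ m) : z⁺ ≤ m := sup_le h hm

private lemma rsz_sup_sub (x y c : E) : (x ⊔ y) - c = (x - c) ⊔ (y - c) := by
  rw [sub_eq_add_neg, sub_eq_add_neg, sub_eq_add_neg]
  exact (OrderIso.addRight (-c)).map_sup x y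

private lemma rsz_posPart_sup (x y : E) : (x ⊔ y)⁺ = x⁺ ⊔ y⁺ := by
  rw [posPart_def, posPart_def, posPart_def, ← sup_sup_sup_comm, sup_idem]

private lemma rsz_abs_nonneg' {x : E} (h : 0 ≤ x) : |x| = x := abs_of_nonneg h
private lemma rsz_neg_le_neg {x y : E} (h : x ≤ y) : -y ≤ -x := by
  calc -y = x + (-x - y) := by abel
    _ ≤ y + (-x - y) := add_le_add_left h _
    _ = -x := by abel

private lemma rsz_neg_abs (x : E) : -|x| ≤ x := by
  have h : -x ≤ |x| := le_sup_right
  exact neg_le.mpr h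

private lemma rsz_abs_smul (c : ℝ) (x : E) : |c • x| = |c| • |x| := by
  have hpos : ∀ r : ℝ, 0 ≤ r → ∀ y : E, |r • y| = r • |y| := by
    intro r hr y
    rcases eq_or_lt_of_le hr with h | h
    · simp [← h]
    · have h2 : |r • y| = r • y ⊔ -(r • y) := rfl
      rw [h2, ← smul_neg, ← rsz_smul_sup h]
      rfl
  rcases le_or_gt 0 c with h | h
  · rw [hpos c h x, abs_of_nonneg h]
  · have h2 : c • x = -((-c) • x) := by rw [neg_smul, neg_neg]
    rw [h2, abs_neg, hpos (-c) (by linarith) x, abs_of_neg h]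

private def RszIdl (M : Set E) : Prop :=
  (0:E) ∈ M ∧ (∀ ⦃x y : E⦄, x ∈ M → y ∈ M → x + y ∈ M) ∧
  (∀ (c : ℝ) ⦃x : E⦄, x ∈ M → c • x ∈ M) ∧
  (∀ ⦃x y : E⦄, |x| ≤ |y| → y ∈ M → x ∈ M)

private lemma rsz_key (e : E) (he0 : 0 ≤ e)
    (he : ∀ x : E, ∃ n : ℕ, |x| ≤ (n : ℝ) • e)
    (hArch : ∀ x b : E, (∀ n : ℤ, n • x ≤ b) → x = 0)
    (u : E) (hu0 : 0 ≤ u) (hu : u ≠ 0) :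
    ∃ φ : E →ₗ[ℝ] ℝ, (∀ x y : E, φ (x ⊔ y) = φ x ⊔ φ y) ∧ φ e = 1 ∧ 0 < φ u := by
  classical
  -- Step 1: find ε > 0 with ¬ u ≤ ε • e
  obtain ⟨ε, hε, hεu⟩ : ∃ ε : ℝ, 0 < ε ∧ ¬ u ≤ ε • e := by
    by_contra hcon
    push_neg at hcon
    apply hu
    apply hArch u e
    intro n
    rcases lt_or_ge 0 n with hn | hn
    · have hn' : (0:ℝ) < (n:ℝ) := by exact_mod_cast hn
      have h1 : u ≤ (n:ℝ)⁻¹ • e := hcon _ (by positivity)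
      have h2 := rsz_smul_mono hn'.le h1
      rw [smul_smul, mul_inv_cancel₀ hn'.ne', one_smul] at h2
      rwa [← Int.cast_smul_eq_zsmul ℝ n u]
    · have hn' : (n:ℝ) ≤ 0 := by exact_mod_cast hn
      have h3 : (0:E) ≤ (-(n:ℝ)) • u := smul_nonneg (by linarith) hu0
      have h4 : (n:ℝ) • u ≤ 0 := by
        have := neg_nonpos.mpr h3
        rwa [neg_smul, neg_neg] at this
      rw [← Int.cast_smul_eq_zsmul ℝ n u]
      exact h4.trans he0
  set v : E := (ε • e - u)⁺ with hvdef
  set w : E := (u - ε • e)⁺ with hwdef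
  have hv0 : 0 ≤ v := posPart_nonneg _
  have hw0 : 0 ≤ w := posPart_nonneg _
  have hwne : w ≠ 0 := by
    intro h
    exact hεu (by rwa [posPart_eq_zero, sub_nonpos] at h)
  clear hεu
  have hwv : w ⊓ v = 0 := by
    have hv' : v = (u - ε • e)⁻ := by
      rw [hvdef, negPart_def, neg_sub, posPart_def]
    rw [hv']
    exact posPart_inf_negPart_eq_zero _
  -- Step 2: the ideal generated by v is proper
  set J : Set E := {x : E | ∃ c : ℝ, 0 ≤ c ∧ |x| ≤ c • v} with hJdef
  have hJidl : RszIdl J := by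
    refine ⟨⟨0, le_refl 0, by simp⟩, ?_, ?_, ?_⟩
    · rintro x y ⟨c, hc, hx⟩ ⟨d, hd, hy⟩
      refine ⟨c + d, by linarith, (abs_add_le x y).trans ?_⟩
      rw [add_smul]; exact add_le_add hx hy
    · rintro r x ⟨c, hc, hx⟩
      refine ⟨|r| * c, by positivity, ?_⟩
      rw [rsz_abs_smul, mul_smul]
      exact rsz_smul_mono (abs_nonneg r) hx
    · rintro x y hxy ⟨c, hc, hy⟩
      exact ⟨c, hc, hxy.trans hy⟩
  have hvJ : v ∈ J := ⟨1, zero_le_one, by rw [abs_of_nonneg hv0, one_smul]⟩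
  have heJ : e ∉ J := by
    rintro ⟨c, hc, hce⟩
    rw [abs_of_nonneg he0] at hce
    obtain ⟨N, hN⟩ := he w
    have hw1 : w ≤ ((N:ℝ) * c) • v := by
      calc w = |w| := (abs_of_nonneg hw0).symm
        _ ≤ (N:ℝ) • e := hN
        _ ≤ (N:ℝ) • (c • v) := rsz_smul_mono (by positivity) hce
        _ = ((N:ℝ) * c) • v := by rw [smul_smul]
    set k : ℝ := max ((N:ℝ) * c) 1 with hkdef
    have hk1 : (1:ℝ) ≤ k := le_max_right _ _
    have hk0 : (0:ℝ) < k := by linarith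
    have hw2 : w ≤ k • v := by
      have h5 : (0:E) ≤ (k - (N:ℝ)*c) • v := smul_nonneg (sub_nonneg.mpr (le_max_left _ _)) hv0
      rw [sub_smul] at h5
      exact hw1.trans (sub_nonneg.mp h5)
    have hw3 : w ≤ k • w := by
      have h5 : (0:E) ≤ (k - 1) • w := smul_nonneg (by linarith) hw0
      rw [sub_smul, one_smul] at h5
      exact sub_nonneg.mp h5
    have hw4 : w ≤ 0 := by
      calc w ≤ (k • w) ⊓ (k • v) := le_inf hw3 hw2
        _ = k • (w ⊓ v) := (rsz_smul_inf hk0 w v).symm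
        _ = 0 := by rw [hwv, smul_zero]
    exact hwne (le_antisymm hw4 hw0)
  -- Step 3: Zorn, to get a maximal ideal M containing v and avoiding e
  set C : Set (Set E) := {M : Set E | RszIdl M ∧ v ∈ M ∧ e ∉ M} with hCdef
  have hchains : ∀ c ⊆ C, IsChain (· ⊆ ·) c → c.Nonempty → ∃ ub ∈ C, ∀ s ∈ c, s ⊆ ub := by
    intro c hcC hchain hcne
    obtain ⟨M0, hM0c⟩ := hcne
    refine ⟨⋃₀ c, ⟨⟨⟨M0, hM0c, (hcC hM0c).1.1⟩, ?_, ?_, ?_⟩, ⟨M0, hM0c, (hcC hM0c).2.1⟩, ?_⟩,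
      fun s hs => Set.subset_sUnion_of_mem hs⟩
    · rintro x y ⟨Mx, hMx, hx⟩ ⟨My, hMy, hy⟩
      rcases hchain.total hMx hMy with h | h
      · exact ⟨My, hMy, (hcC hMy).1.2.1 (h hx) hy⟩
      · exact ⟨Mx, hMx, (hcC hMx).1.2.1 hx (h hy)⟩
    · rintro r x ⟨Mx, hMx, hx⟩
      exact ⟨Mx, hMx, (hcC hMx).1.2.2.1 r hx⟩
    · rintro x y hxy ⟨My, hMy, hy⟩
      exact ⟨My, hMy, (hcC hMy).1.2.2.2 hxy hy⟩
    · rintro ⟨Mi, hMi, hei⟩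
      exact (hcC hMi).2.2 hei
  obtain ⟨M, hJM, hMmax⟩ := zorn_subset_nonempty C hchains J ⟨hJidl, hvJ, heJ⟩
  obtain ⟨⟨hM0, hMadd, hMsmul, hMsolid⟩, hvM, heM⟩ := hMmax.1
  have habsM : ∀ x ∈ M, |x| ∈ M := fun x hx =>
    hMsolid (le_of_eq (abs_of_nonneg (abs_nonneg x))) hx
  have hMe_le : ∀ m, m ∈ M → e ≤ m → False := fun m hm hle =>
    heM (hMsolid (by rw [abs_of_nonneg he0]; exact hle.trans (le_abs_self m)) hm)
  have hMsmul_e : ∀ c : ℝ, 0 < c → c • e ∈ M → False := by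
    intro c hc hm
    have h1 := hMsmul c⁻¹ hm
    rw [smul_smul, inv_mul_cancel₀ hc.ne', one_smul] at h1
    exact heM h1
  -- Step 4: maximality gives: anything outside M, together with M, generates e
  have hmax : ∀ z : E, z ∉ M → ∃ m ∈ M, 0 ≤ m ∧ ∃ c : ℝ, 0 ≤ c ∧ e ≤ m + c • |z| := by
    intro z hz
    set Mz : Set E := {x : E | ∃ m ∈ M, ∃ c : ℝ, 0 ≤ c ∧ |x| ≤ m + c • |z|} with hMzdef
    have hMzidl : RszIdl Mz := by
      refine ⟨⟨0, hM0, 0, le_refl 0, by simp⟩, ?_, ?_, ?_⟩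
      · rintro x y ⟨m1, hm1, c1, hc1, hx⟩ ⟨m2, hm2, c2, hc2, hy⟩
        refine ⟨m1 + m2, hMadd hm1 hm2, c1 + c2, by linarith, (abs_add_le x y).trans ?_⟩
        rw [add_smul]
        calc |x| + |y| ≤ (m1 + c1 • |z|) + (m2 + c2 • |z|) := add_le_add hx hy
          _ = m1 + m2 + (c1 • |z| + c2 • |z|) := by abel
      · rintro r x ⟨m, hm, c, hc, hx⟩
        refine ⟨|r| • m, hMsmul _ hm, |r| * c, by positivity, ?_⟩
        rw [rsz_abs_smul, mul_smul]
        calc |r| • |x| ≤ |r| • (m + c • |z|) := rsz_smul_mono (abs_nonneg r) hx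
          _ = |r| • m + |r| • (c • |z|) := smul_add _ _ _
      · rintro x y hxy ⟨m, hm, c, hc, hy⟩
        exact ⟨m, hm, c, hc, hxy.trans hy⟩
    have hMMz : M ⊆ Mz := fun x hx => ⟨|x|, habsM x hx, 0, le_refl 0, by simp⟩
    have hzMz : z ∈ Mz := ⟨0, hM0, 1, zero_le_one, by simp⟩
    have heMz : e ∈ Mz := by
      by_contra heMz
      have hMzC : Mz ∈ C := ⟨hMzidl, hMMz hvM, heMz⟩
      exact hz ((hMmax.2 hMzC hMMz) hzMz)
    obtain ⟨m, hm, c, hc, hle⟩ := heMz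
    rw [abs_of_nonneg he0] at hle
    exact ⟨|m|, habsM m hm, abs_nonneg m, c, hc,
      hle.trans (add_le_add_left (le_abs_self m) _)⟩
  -- Step 5: M is "prime" on disjoint positive elements
  have hdisj : ∀ y z : E, 0 ≤ y → 0 ≤ z → y ⊓ z = 0 → y ∉ M → z ∉ M → False := by
    intro y z hy hz hyz hyM hzM
    obtain ⟨m1, hm1, hm1', c1, hc1, h1⟩ := hmax y hyM
    obtain ⟨m2, hm2, hm2', c2, hc2, h2⟩ := hmax z hzM
    rw [abs_of_nonneg hy] at h1
    rw [abs_of_nonneg hz] at h2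
    set c : ℝ := max c1 c2 + 1 with hcdef
    have hc0 : (0:ℝ) < c := by
      have : (0:ℝ) ≤ max c1 c2 := le_trans hc1 (le_max_left _ _)
      linarith
    have hsc : ∀ (ci : ℝ), ci ≤ c → ∀ t : E, 0 ≤ t → ci • t ≤ c • t := by
      intro ci hci t ht
      have h5 : (0:E) ≤ (c - ci) • t := smul_nonneg (by linarith) ht
      rw [sub_smul] at h5
      exact sub_nonneg.mp h5
    have hA : e ≤ m1 + c • y :=
      h1.trans (add_le_add_right (hsc c1 (by have := le_max_left c1 c2; linarith) y hy) m1)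
    have hB : e ≤ m2 + c • z :=
      h2.trans (add_le_add_right (hsc c2 (by have := le_max_right c1 c2; linarith) z hz) m2)
    have hfin : e ≤ m1 + m2 := by
      calc e ≤ (m1 + c • y) ⊓ (m2 + c • z) := le_inf hA hB
        _ ≤ (m1 + m2 + c • y) ⊓ (m1 + m2 + c • z) := by
            refine inf_le_inf ?_ ?_
            · exact add_le_add_left (le_add_of_nonneg_right hm2') _
            · have : m2 ≤ m1 + m2 := le_add_of_nonneg_left hm1'
              exact add_le_add_left this _
        _ = m1 + m2 + (c • y ⊓ c • z) := (add_inf _ _ _).symm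
        _ = m1 + m2 + c • (y ⊓ z) := by rw [rsz_smul_inf hc0]
        _ = m1 + m2 := by rw [hyz, smul_zero, add_zero]
    exact hMe_le _ (hMadd hm1 hm2) hfin
  -- Step 6: the functional
  set S : E → Set ℝ := fun x => {r : ℝ | (x - r • e)⁺ ∈ M} with hSdef
  set T : E → Set ℝ := fun x => {r : ℝ | (r • e - x)⁺ ∈ M} with hTdef
  have hSsolid : ∀ (x : E) (m : E), 0 ≤ x → x ≤ m → m ∈ M → x ∈ M := by
    intro x m hx hxm hm
    refine hMsolid ?_ hm
    rw [abs_of_nonneg hx]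
    exact hxm.trans (le_abs_self m)
  have hse : ∀ {r s : ℝ}, r ≤ s → r • e ≤ s • e := by
    intro r s h
    have h5 : (0:E) ≤ (s - r) • e := smul_nonneg (by linarith) he0
    rw [sub_smul] at h5
    exact sub_nonneg.mp h5
  have hSup : ∀ (x : E) {r s : ℝ}, r ≤ s → r ∈ S x → s ∈ S x := by
    intro x r s hrs hr
    exact hSsolid _ _ (posPart_nonneg _)
      (posPart_mono (sub_le_sub_left (hse hrs) x)) hr
  have hSne : ∀ x : E, (S x).Nonempty := by
    intro x
    obtain ⟨N, hN⟩ := he x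
    refine ⟨(N:ℝ), ?_⟩
    have : x - (N:ℝ) • e ≤ 0 := sub_nonpos.mpr ((le_abs_self x).trans hN)
    show (x - (N:ℝ) • e)⁺ ∈ M
    rw [posPart_eq_zero.mpr this]
    exact hM0
  have hSbdd : ∀ x : E, BddBelow (S x) := by
    intro x
    obtain ⟨N, hN⟩ := he x
    refine ⟨-(N:ℝ), ?_⟩
    intro r hr
    by_contra hcon
    push_neg at hcon
    have hc0 : (0:ℝ) < -(N:ℝ) - r := by linarith
    have h6 : (-(N:ℝ) - r) • e ≤ x - r • e := by
      have h7 : -((N:ℝ) • e) ≤ x := (rsz_neg_le_neg hN).trans (rsz_neg_abs x)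
      have h8 : -((N:ℝ) • e) - r • e ≤ x - r • e := sub_le_sub_right h7 _
      rw [sub_smul, neg_smul]
      exact h8
    have h9 : (-(N:ℝ) - r) • e ≤ (x - r • e)⁺ := h6.trans (le_posPart _)
    have h10 : (-(N:ℝ) - r) • e ∈ M :=
      hSsolid _ _ (smul_nonneg hc0.le he0) h9 hr
    exact hMsmul_e _ hc0 h10
  set lam : E → ℝ := fun x => sInf (S x) with hlamdef
  have hlam_le : ∀ (x : E) {s : ℝ}, s ∈ S x → lam x ≤ s := by
    intro x s hs
    exact csInf_le (hSbdd x) hs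
  have hSgt : ∀ (x : E) {s : ℝ}, lam x < s → s ∈ S x := by
    intro x s hs
    by_contra hcon
    have h5 : s ≤ lam x := by
      apply le_csInf (hSne x)
      intro r hr
      by_contra h6
      push_neg at h6
      exact hcon (hSup x h6.le hr)
    exact absurd hs (not_lt.mpr h5)
  have hST : ∀ (x : E) {r s : ℝ}, r ∈ T x → s ∈ S x → r ≤ s := by
    intro x r s hr hs
    by_contra hcon
    push_neg at hcon
    have hc0 : (0:ℝ) < r - s := by linarith
    have h5 : (r - s) • e ≤ (r • e - x)⁺ + (x - s • e)⁺ := by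
      have h6 : (r - s) • e = (r • e - x) + (x - s • e) := by
        rw [sub_smul]; abel
      rw [h6]
      exact add_le_add (le_posPart _) (le_posPart _)
    have h7 : (r - s) • e ∈ M :=
      hSsolid _ _ (smul_nonneg hc0.le he0) h5 (hMadd hr hs)
    exact hMsmul_e _ hc0 h7
  have hTle : ∀ (x : E) {r : ℝ}, r ∈ T x → r ≤ lam x := by
    intro x r hr
    exact le_csInf (hSne x) fun s hs => hST x hr hs
  have hgap : ∀ (x : E) {r : ℝ}, r < lam x → r ∈ T x := by
    intro x r hr
    set s : ℝ := (r + lam x) / 2 with hsdef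
    have hrs : r < s := by rw [hsdef]; linarith
    have hslam : s < lam x := by rw [hsdef]; linarith
    have hsS : (x - s • e)⁺ ∉ M := by
      intro h
      exact absurd (hlam_le x h) (not_le.mpr hslam)
    have hd : (x - s • e)⁺ ⊓ (r • e - x)⁺ = 0 := by
      have hAB : (x - s • e) + (r • e - x) = (r - s) • e := by
        rw [sub_smul]; abel
      have hneg : (r - s) • e ≤ 0 := by
        have h5 : (0:E) ≤ (s - r) • e := smul_nonneg (by linarith) he0
        have h6 : -((s - r) • e) ≤ 0 := neg_nonpos.mpr h5
        rwa [← neg_smul, neg_sub] at h6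
      have h7 : x - s • e ≤ -(r • e - x) := by
        have h8 : (x - s • e) + (r • e - x) ≤ 0 := hAB.le.trans hneg
        calc x - s • e = ((x - s • e) + (r • e - x)) - (r • e - x) := by abel
          _ ≤ 0 - (r • e - x) := sub_le_sub_right h8 _
          _ = -(r • e - x) := zero_sub _
      have h9 : (x - s • e)⁺ ≤ (r • e - x)⁻ := by
        have h10 : (x - s • e)⁺ ≤ (-(r • e - x))⁺ := posPart_mono h7
        rwa [posPart_def (-(r • e - x)), ← negPart_def] at h10
      apply le_antisymm
      · calc (x - s • e)⁺ ⊓ (r • e - x)⁺ ≤ (r • e - x)⁻ ⊓ (r • e - x)⁺ :=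
              inf_le_inf_right _ h9
          _ = (r • e - x)⁺ ⊓ (r • e - x)⁻ := inf_comm _ _
          _ = 0 := posPart_inf_negPart_eq_zero _
      · exact le_inf (posPart_nonneg _) (posPart_nonneg _)
    show (r • e - x)⁺ ∈ M
    by_contra hcon
    exact hdisj _ _ (posPart_nonneg _) (posPart_nonneg _) hd hsS hcon
  -- additivity
  have hSS : ∀ (x y : E) {s t : ℝ}, s ∈ S x → t ∈ S y → s + t ∈ S (x + y) := by
    intro x y s t hs ht
    have h5 : (x + y - (s + t) • e) ≤ (x - s • e)⁺ + (y - t • e)⁺ := by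
      have h6 : x + y - (s + t) • e = (x - s • e) + (y - t • e) := by
        rw [add_smul]; abel
      rw [h6]
      exact add_le_add (le_posPart _) (le_posPart _)
    have h7 : (x + y - (s + t) • e)⁺ ≤ (x - s • e)⁺ + (y - t • e)⁺ :=
      rsz_posPart_le h5 (add_nonneg (posPart_nonneg _) (posPart_nonneg _))
    exact hSsolid _ _ (posPart_nonneg _) h7 (hMadd hs ht)
  have hTT : ∀ (x y : E) {r q : ℝ}, r ∈ T x → q ∈ T y → r + q ∈ T (x + y) := by
    intro x y r q hr hq
    have h5 : ((r + q) • e - (x + y)) ≤ (r • e - x)⁺ + (q • e - y)⁺ := by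
      have h6 : (r + q) • e - (x + y) = (r • e - x) + (q • e - y) := by
        rw [add_smul]; abel
      rw [h6]
      exact add_le_add (le_posPart _) (le_posPart _)
    have h7 : ((r + q) • e - (x + y))⁺ ≤ (r • e - x)⁺ + (q • e - y)⁺ :=
      rsz_posPart_le h5 (add_nonneg (posPart_nonneg _) (posPart_nonneg _))
    exact hSsolid _ _ (posPart_nonneg _) h7 (hMadd hr hq)
  have hadd : ∀ x y : E, lam (x + y) = lam x + lam y := by
    intro x y
    apply le_antisymm
    · have h1 : ∀ t ∈ S y, lam (x + y) ≤ lam x + t := by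
        intro t ht
        have h2 : lam (x + y) - t ≤ lam x := by
          apply le_csInf (hSne x)
          intro s hs
          have := hlam_le (x + y) (hSS x y hs ht)
          linarith
        linarith
      have h3 : lam (x + y) - lam x ≤ lam y := by
        apply le_csInf (hSne y)
        intro t ht
        have := h1 t ht
        linarith
      linarith
    · by_contra hcon
      push_neg at hcon
      set δ : ℝ := lam x + lam y - lam (x + y) with hδdef
      have hδ : 0 < δ := by rw [hδdef]; linarith
      have hr : lam x - δ / 4 ∈ T x := hgap x (by linarith)
      have hq : lam y - δ / 4 ∈ T y := hgap y (by linarith)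
      have h5 := hTle (x + y) (hTT x y hr hq)
      rw [hδdef] at h5
      linarith
  have hmono : ∀ x y : E, x ≤ y → lam x ≤ lam y := by
    intro x y hxy
    apply csInf_le_csInf (hSbdd x) (hSne y)
    intro r hr
    exact hSsolid _ _ (posPart_nonneg _) (posPart_mono (sub_le_sub_right hxy _)) hr
  have hlam0 : lam 0 = 0 := by
    apply le_antisymm
    · apply hlam_le
      show ((0:E) - (0:ℝ) • e)⁺ ∈ M
      have h5 : ((0:E) - (0:ℝ) • e) = 0 := by simp
      rw [h5, posPart_zero]
      exact hM0
    · apply le_csInf (hSne 0)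
      intro r hr
      by_contra hcon
      push_neg at hcon
      have h5 : ((0:E) - r • e) = (-r) • e := by rw [neg_smul]; abel
      have h6 : ((0:E) - r • e)⁺ = (-r) • e := by
        rw [h5]
        exact posPart_of_nonneg (smul_nonneg (by linarith) he0)
      have h7 : (-r) • e ∈ M := by rw [← h6]; exact hr
      exact hMsmul_e _ (by linarith) h7
  have hneg : ∀ x : E, lam (-x) = -lam x := by
    intro x
    have h5 := hadd x (-x)
    rw [add_neg_cancel, hlam0] at h5
    linarith
  have hsmul_pos_le : ∀ (c : ℝ), 0 < c → ∀ x : E, lam (c • x) ≤ c * lam x := by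
    intro c hc x
    have hmem : ∀ s ∈ S x, c * s ∈ S (c • x) := by
      intro s hs
      show (c • x - (c * s) • e)⁺ ∈ M
      have h5 : c • x - (c * s) • e = c • (x - s • e) := by
        rw [smul_sub, smul_smul]
      rw [h5, rsz_smul_posPart hc.le]
      exact hMsmul c hs
    have h6 : lam (c • x) / c ≤ lam x := by
      apply le_csInf (hSne x)
      intro s hs
      have h7 := hlam_le (c • x) (hmem s hs)
      rw [div_le_iff₀ hc]
      linarith [mul_comm s c]
    have h8 := mul_le_mul_of_nonneg_left h6 hc.le
    rw [mul_div_cancel₀ _ hc.ne'] at h8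
    linarith [mul_comm c (lam x)]
  have hsmul : ∀ (c : ℝ) (x : E), lam (c • x) = c * lam x := by
    have hpos : ∀ (c : ℝ), 0 < c → ∀ x : E, lam (c • x) = c * lam x := by
      intro c hc x
      apply le_antisymm (hsmul_pos_le c hc x)
      have h5 := hsmul_pos_le c⁻¹ (by positivity) (c • x)
      rw [smul_smul, inv_mul_cancel₀ hc.ne', one_smul] at h5
      have h6 := mul_le_mul_of_nonneg_left h5 hc.le
      rw [← mul_assoc, mul_inv_cancel₀ hc.ne', one_mul] at h6
      linarith
    intro c x
    rcases lt_trichotomy c 0 with h | h | h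
    · have h5 : c • x = -((-c) • x) := by rw [neg_smul, neg_neg]
      rw [h5, hneg, hpos (-c) (by linarith) x]
      ring
    · rw [h, zero_smul, hlam0, zero_mul]
    · exact hpos c h x
  have hlat : ∀ x y : E, lam (x ⊔ y) = lam x ⊔ lam y := by
    intro x y
    apply le_antisymm
    · apply le_of_forall_gt_imp_ge_of_dense
      intro s hs
      have hsx : s ∈ S x := hSgt x (lt_of_le_of_lt le_sup_left hs)
      have hsy : s ∈ S y := hSgt y (lt_of_le_of_lt le_sup_right hs)
      apply hlam_le
      show (x ⊔ y - s • e)⁺ ∈ M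
      have h5 : (x ⊔ y - s • e)⁺ = (x - s • e)⁺ ⊔ (y - s • e)⁺ := by
        rw [rsz_sup_sub, rsz_posPart_sup]
      have h6 : (x - s • e)⁺ ⊔ (y - s • e)⁺ ≤ (x - s • e)⁺ + (y - s • e)⁺ :=
        sup_le (le_add_of_nonneg_right (posPart_nonneg _))
          (le_add_of_nonneg_left (posPart_nonneg _))
      rw [h5]
      exact hSsolid _ _ (le_sup_of_le_left (posPart_nonneg _)) h6 (hMadd hsx hsy)
    · exact sup_le (hmono _ _ le_sup_left) (hmono _ _ le_sup_right)
  have hlame : lam e = 1 := by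
    apply le_antisymm
    · apply hlam_le
      show (e - (1:ℝ) • e)⁺ ∈ M
      rw [one_smul, sub_self, posPart_zero]
      exact hM0
    · apply le_csInf (hSne e)
      intro r hr
      by_contra hcon
      push_neg at hcon
      have h5 : e - r • e = (1 - r) • e := by rw [sub_smul, one_smul]
      have h6 : (e - r • e)⁺ = (1 - r) • e := by
        rw [h5]
        exact posPart_of_nonneg (smul_nonneg (by linarith) he0)
      have h7 : (1 - r) • e ∈ M := by rw [← h6]; exact hr
      exact hMsmul_e _ (by linarith) h7
  have hlamu : ε ≤ lam u := by
    apply hTle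
    show (ε • e - u)⁺ ∈ M
    exact hvM
  have hlin : IsLinearMap ℝ lam := ⟨hadd, fun c x => hsmul c x⟩
  refine ⟨IsLinearMap.mk' lam hlin, ?_, ?_, ?_⟩
  · intro x y
    simp only [IsLinearMap.mk'_apply]
    exact hlat x y
  · simp only [IsLinearMap.mk'_apply]
    exact hlame
  · simp only [IsLinearMap.mk'_apply]
    exact lt_of_lt_of_le hε hlamu

theorem exists_riesz_hom_to_real (e : E) (he0 : 0 ≤ e)
    (he : ∀ x : E, ∃ n : ℕ, |x| ≤ (n : ℝ) • e)
    (hArch : ∀ x b : E, (∀ n : ℤ, n • x ≤ b) → x = 0)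
    (a : E) (ha : a ≠ 0) :
    ∃ φ : E →ₗ[ℝ] ℝ, (∀ x y : E, φ (x ⊔ y) = φ x ⊔ φ y) ∧ φ e = 1 ∧ φ a ≠ 0 := by
  by_cases hap : a⁺ = 0
  · have han : a⁻ ≠ 0 := by
      intro h
      apply ha
      have := posPart_sub_negPart a
      rw [hap, h, sub_zero] at this
      exact this.symm
    obtain ⟨φ, hφlat, hφe, hφu⟩ :=
      rsz_key e he0 he hArch (a⁻) (negPart_nonneg a) han
    refine ⟨φ, hφlat, hφe, ?_⟩
    have h1 : φ (a⁻) = -φ a ⊔ 0 := by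
      rw [negPart_def, hφlat, map_neg, map_zero]
    rw [h1] at hφu
    intro h2
    rw [h2] at hφu
    simp at hφu
  · obtain ⟨φ, hφlat, hφe, hφu⟩ :=
      rsz_key e he0 he hArch (a⁺) (posPart_nonneg a) hap
    refine ⟨φ, hφlat, hφe, ?_⟩
    have h1 : φ (a⁺) = φ a ⊔ 0 := by
      rw [posPart_def, hφlat, map_zero]
    rw [h1] at hφu
    intro h2
    rw [h2] at hφu
    simp at hφu
end
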